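/- arXiv:2106.13070 — 4 statements merged into one kernel-verified Lean document; each statement's English description precedes it below -/
import Mathlib

section
/- Let I ⊆ ℝ be an interval and p ≥ 2. If M : I^p → I^p is a contractive mean-type mapping (not necessarily continuous), then there exists at most one continuous mean K : I^p → I satisfying K ∘ M = K. -/
open Set Filter Topology

noncomputable def vmax {p : ℕ} (v : Fin p → ℝ) : ℝ := ⨆ i, v i
noncomputable def vmin {p : ℕ} (v : Fin p → ℝ) : ℝ := ⨅ i, v i

/-- The "box" `I^p`. -/
def box (I : Set ℝ) (p : ℕ) : Set (Fin p → ℝ) := {v | ∀ i, v i ∈ I}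

/-- `K` is a mean on `I^p`: internality. -/
def IsMeanOn (I : Set ℝ) (p : ℕ) (K : (Fin p → ℝ) → ℝ) : Prop :=
  ∀ v ∈ box I p, vmin v ≤ K v ∧ K v ≤ vmax v

/-- `M` is a mean-type mapping: each coordinate is a mean. -/
def MeanType (I : Set ℝ) (p : ℕ) (M : (Fin p → ℝ) → (Fin p → ℝ)) : Prop :=
  ∀ v ∈ box I p, ∀ i, vmin v ≤ M v i ∧ M v i ≤ vmax v

def Nonconstant {p : ℕ} (v : Fin p → ℝ) : Prop := ¬ ∃ c, ∀ i, v i = c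

def Contractive (I : Set ℝ) (p : ℕ) (M : (Fin p → ℝ) → (Fin p → ℝ)) : Prop :=
  ∀ v ∈ box I p, Nonconstant v → vmax (M v) - vmin (M v) < vmax v - vmin v

def WeaklyContractive (I : Set ℝ) (p : ℕ) (M : (Fin p → ℝ) → (Fin p → ℝ)) : Prop :=
  ∀ v ∈ box I p, Nonconstant v → ∃ n₀ : ℕ, ∀ n ≥ n₀,
    vmax (M^[n] v) - vmin (M^[n] v) < vmax v - vmin v

/-- `T(a) = {v ∈ I^p : max v - min v ≤ a}`. -/
def Tset (I : Set ℝ) (p : ℕ) (a : ℝ) : Set (Fin p → ℝ) :=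
  {v ∈ box I p | vmax v - vmin v ≤ a}

section Aux

variable {p : ℕ} [NeZero p]

lemma le_vmax (v : Fin p → ℝ) (i : Fin p) : v i ≤ vmax v :=
  le_ciSup (Set.Finite.bddAbove (Set.finite_range v)) i

lemma vmin_le (v : Fin p → ℝ) (i : Fin p) : vmin v ≤ v i :=
  ciInf_le (Set.Finite.bddBelow (Set.finite_range v)) i

lemma exists_eq_vmax (v : Fin p → ℝ) : ∃ i, v i = vmax v := by
  obtain ⟨i, hi⟩ := Finite.exists_max v
  exact ⟨i, le_antisymm (le_vmax v i) (ciSup_le hi)⟩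

lemma exists_eq_vmin (v : Fin p → ℝ) : ∃ i, v i = vmin v := by
  obtain ⟨i, hi⟩ := Finite.exists_min v
  exact ⟨i, le_antisymm (le_ciInf hi) (vmin_le v i)⟩

lemma vmax_eq_sup' (v : Fin p → ℝ) :
    vmax v = Finset.univ.sup' (Finset.univ_nonempty) v := by
  refine le_antisymm (ciSup_le fun i => Finset.le_sup' v (Finset.mem_univ i)) ?_
  exact Finset.sup'_le _ _ fun i _ => le_vmax v i

lemma vmin_eq_inf' (v : Fin p → ℝ) :
    vmin v = Finset.univ.inf' (Finset.univ_nonempty) v := by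
  obtain ⟨i, hi⟩ := exists_eq_vmin v
  refine le_antisymm (Finset.le_inf' _ _ fun j _ => vmin_le v j) ?_
  exact hi ▸ Finset.inf'_le v (Finset.mem_univ i)

lemma continuous_vmax : Continuous (vmax : (Fin p → ℝ) → ℝ) := by
  have : (vmax : (Fin p → ℝ) → ℝ)
      = fun v => Finset.univ.sup' Finset.univ_nonempty (fun i => v i) := by
    funext v; exact vmax_eq_sup' v
  rw [this]
  exact Continuous.finset_sup'_apply _ fun i _ => continuous_apply i

lemma continuous_vmin : Continuous (vmin : (Fin p → ℝ) → ℝ) := by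
  have : (vmin : (Fin p → ℝ) → ℝ)
      = fun v => Finset.univ.inf' Finset.univ_nonempty (fun i => v i) := by
    funext v; exact vmin_eq_inf' v
  rw [this]
  exact Continuous.finset_inf'_apply _ fun i _ => continuous_apply i

end Aux

theorem stmt0 (I : Set ℝ) (hI : I.OrdConnected) (p : ℕ) (hp : 2 ≤ p)
    (M : (Fin p → ℝ) → (Fin p → ℝ)) (hMT : MeanType I p M) (hC : Contractive I p M)
    (K₁ K₂ : (Fin p → ℝ) → ℝ)
    (h₁m : IsMeanOn I p K₁) (h₁c : ContinuousOn K₁ (box I p))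
    (h₁i : ∀ v ∈ box I p, K₁ (M v) = K₁ v)
    (h₂m : IsMeanOn I p K₂) (h₂c : ContinuousOn K₂ (box I p))
    (h₂i : ∀ v ∈ box I p, K₂ (M v) = K₂ v) :
    ∀ v ∈ box I p, K₁ v = K₂ v := by
  have : NeZero p := ⟨by omega⟩
  intro v hv
  -- the cube [vmin v, vmax v]^p
  set a : ℝ := vmin v with ha
  set b : ℝ := vmax v with hb
  have haI : a ∈ I := by obtain ⟨i, hi⟩ := exists_eq_vmin v; rw [ha, ← hi]; exact hv i
  have hbI : b ∈ I := by obtain ⟨i, hi⟩ := exists_eq_vmax v; rw [hb, ← hi]; exact hv i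
  set cube : Set (Fin p → ℝ) := Set.Icc (fun _ => a) (fun _ => b) with hcube
  have hcube_box : cube ⊆ box I p := by
    intro w hw i
    exact hI.out haI hbI ⟨hw.1 i, hw.2 i⟩
  have hcube_compact : IsCompact cube := isCompact_Icc
  -- the set A of points in the cube with the same K₁, K₂ values as v
  set A : Set (Fin p → ℝ) :=
    (cube ∩ K₁ ⁻¹' {K₁ v}) ∩ (cube ∩ K₂ ⁻¹' {K₂ v}) with hA
  have hA_cube : A ⊆ cube := fun w hw => hw.1.1
  have hA_closed : IsClosed A := by
    refine IsClosed.inter ?_ ?_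
    · exact (h₁c.mono hcube_box).preimage_isClosed_of_isClosed isClosed_Icc isClosed_singleton
    · exact (h₂c.mono hcube_box).preimage_isClosed_of_isClosed isClosed_Icc isClosed_singleton
  have hA_compact : IsCompact A := hcube_compact.of_isClosed_subset hA_closed hA_cube
  have hvA : v ∈ A := by
    have hvcube : v ∈ cube := ⟨fun i => vmin_le v i, fun i => le_vmax v i⟩
    exact ⟨⟨hvcube, rfl⟩, ⟨hvcube, rfl⟩⟩
  -- minimize the diameter on A
  have hg : ContinuousOn (fun w => vmax w - vmin w) A :=
    (continuous_vmax.sub continuous_vmin).continuousOn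
  obtain ⟨w, hwA, hwmin⟩ := hA_compact.exists_isMinOn ⟨v, hvA⟩ hg
  have hw_box : w ∈ box I p := hcube_box (hA_cube hwA)
  -- the minimizer must be a constant vector
  have hconst : vmax w = vmin w := by
    by_contra hne
    have hlt : vmin w < vmax w := by
      obtain ⟨i, hi⟩ := exists_eq_vmin w
      have hle : vmin w ≤ vmax w := hi ▸ le_vmax w i
      exact lt_of_le_of_ne hle fun h => hne h.symm
    have hnc : Nonconstant w := by
      rintro ⟨c, hc⟩
      obtain ⟨i, hi⟩ := exists_eq_vmin w
      obtain ⟨j, hj⟩ := exists_eq_vmax w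
      rw [← hi, ← hj, hc i, hc j] at hlt
      exact lt_irrefl _ hlt
    have hcontr := hC w hw_box hnc
    -- M w is in A
    have hMw_cube : M w ∈ cube := by
      constructor
      · intro i
        have h1 : a ≤ vmin w := le_ciInf fun j => (hA_cube hwA).1 j
        exact h1.trans (hMT w hw_box i).1
      · intro i
        refine le_trans (hMT w hw_box i).2 (ciSup_le fun j => (hA_cube hwA).2 j)
    have hMw_box : M w ∈ box I p := hcube_box hMw_cube
    have hMwA : M w ∈ A := by
      refine ⟨⟨hMw_cube, ?_⟩, ⟨hMw_cube, ?_⟩⟩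
      · show K₁ (M w) = K₁ v
        rw [h₁i w hw_box]; exact hwA.1.2
      · show K₂ (M w) = K₂ v
        rw [h₂i w hw_box]; exact hwA.2.2
    have hmin := hwmin hMwA
    simp only [Set.mem_setOf_eq] at hmin
    linarith
  -- hence K₁ w = K₂ w = the constant value, and K₁ v = K₁ w etc.
  have h1 := h₁m w hw_box
  have h2 := h₂m w hw_box
  have e1 : K₁ w = vmax w := le_antisymm h1.2 (hconst ▸ h1.1)
  have e2 : K₂ w = vmax w := le_antisymm h2.2 (hconst ▸ h2.1)
  have := hwA.1.2
  have := hwA.2.2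
  simp only [Set.mem_preimage, Set.mem_singleton_iff] at *
  rw [← hwA.1.2, ← hwA.2.2, e1, e2]
end

section
/- Let I ⊆ ℝ be an interval, p ≥ 2, M : I^p → I^p a contractive mean-type mapping, and F : I^p → [0,∞) an M-invariant function. Define T(a) := {v ∈ I^p : max(v) − min(v) ≤ a}. Then for every a > 0, F(T(a)) = ⋃_{α ∈ [0,a)} F(T(α)), i.e., the set-valued map a ↦ F(T(a)) is left-continuous. -/
open Set Filter Topology

theorem stmt7 (I : Set ℝ) (hI : I.OrdConnected) (p : ℕ) (hp : 2 ≤ p)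
    (M : (Fin p → ℝ) → (Fin p → ℝ)) (hMT : MeanType I p M) (hC : Contractive I p M)
    (F : (Fin p → ℝ) → ℝ) (hF0 : ∀ v ∈ box I p, 0 ≤ F v)
    (hFi : ∀ v ∈ box I p, F (M v) = F v) :
    ∀ a : ℝ, 0 < a →
      F '' Tset I p a = ⋃ α ∈ Set.Ico (0:ℝ) a, F '' Tset I p α := by
  intro a ha
  have hp0 : 0 < p := by omega
  have hne : Nonempty (Fin p) := ⟨⟨0, hp0⟩⟩
  have hbdda : ∀ w : Fin p → ℝ, BddAbove (Set.range w) := fun w =>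
    (Set.finite_range w).bddAbove
  have hbddb : ∀ w : Fin p → ℝ, BddBelow (Set.range w) := fun w =>
    (Set.finite_range w).bddBelow
  have hminle : ∀ w : Fin p → ℝ, vmin w ≤ vmax w := fun w =>
    le_trans (ciInf_le (hbddb w) ⟨0, hp0⟩) (le_ciSup (hbdda w) ⟨0, hp0⟩)
  apply Set.Subset.antisymm
  · rintro x ⟨v, ⟨hvb, hvo⟩, rfl⟩
    by_cases h : vmax v - vmin v < a
    · exact Set.mem_iUnion₂.2 ⟨vmax v - vmin v, ⟨sub_nonneg.2 (hminle v), h⟩,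
        ⟨v, ⟨hvb, le_refl _⟩, rfl⟩⟩
    · have heq : vmax v - vmin v = a := le_antisymm hvo (not_lt.1 h)
      have hnc : Nonconstant v := by
        rintro ⟨c, hc⟩
        have h1 : vmax v = c := le_antisymm (ciSup_le fun i => (hc i).le)
          ((hc ⟨0, hp0⟩).symm.le.trans (le_ciSup (hbdda v) ⟨0, hp0⟩))
        have h2 : vmin v = c := le_antisymm
          ((ciInf_le (hbddb v) ⟨0, hp0⟩).trans (hc ⟨0, hp0⟩).le)
          (le_ciInf fun i => (hc i).ge)
        rw [h1, h2, sub_self] at heq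
        exact absurd heq.symm (ne_of_gt ha)
      obtain ⟨i₀, hi₀⟩ := Finite.exists_min v
      obtain ⟨i₁, hi₁⟩ := Finite.exists_max v
      have hmin : vmin v = v i₀ := le_antisymm (ciInf_le (hbddb v) i₀) (le_ciInf hi₀)
      have hmax : vmax v = v i₁ := le_antisymm (ciSup_le hi₁) (le_ciSup (hbdda v) i₁)
      have hMvb : M v ∈ box I p := by
        intro i
        have h1 := (hMT v hvb i).1
        have h2 := (hMT v hvb i).2
        exact hI.out (hmin ▸ hvb i₀) (hmax ▸ hvb i₁) ⟨h1, h2⟩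
      have hosc : vmax (M v) - vmin (M v) < a := heq ▸ hC v hvb hnc
      exact Set.mem_iUnion₂.2 ⟨vmax (M v) - vmin (M v), ⟨sub_nonneg.2 (hminle (M v)), hosc⟩,
        ⟨M v, ⟨hMvb, le_refl _⟩, hFi v hvb⟩⟩
  · refine Set.iUnion₂_subset fun α hα => Set.image_mono (f := F) ?_
    rintro v ⟨hvb, hvo⟩
    exact ⟨hvb, hvo.trans hα.2.le⟩
end

section
/- Let I ⊆ ℝ be an interval and p = 2. A mean-type mapping M : I² → I² is weakly contractive if and only if M² (the second iterate) is contractive. -/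
open Set Filter Topology

lemma vmax_two (v : Fin 2 → ℝ) : vmax v = max (v 0) (v 1) := by
  apply le_antisymm
  · exact ciSup_le fun i => by fin_cases i <;> [exact le_max_left _ _; exact le_max_right _ _]
  · exact max_le (le_ciSup (Set.finite_range v).bddAbove 0)
      (le_ciSup (Set.finite_range v).bddAbove 1)

lemma vmin_two (v : Fin 2 → ℝ) : vmin v = min (v 0) (v 1) := by
  apply le_antisymm
  · exact le_min (ciInf_le (Set.finite_range v).bddBelow 0)
      (ciInf_le (Set.finite_range v).bddBelow 1)
  · exact le_ciInf fun i => by fin_cases i <;> [exact min_le_left _ _; exact min_le_right _ _]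

section
variable {I : Set ℝ} {M : (Fin 2 → ℝ) → (Fin 2 → ℝ)}

lemma box_M (hI : I.OrdConnected) (hMT : MeanType I 2 M) {v : Fin 2 → ℝ}
    (hv : v ∈ box I 2) : M v ∈ box I 2 := by
  intro i
  have h := hMT v hv i
  have hmin : vmin v ∈ I := by
    rw [vmin_two]; rcases min_cases (v 0) (v 1) with ⟨h',_⟩|⟨h',_⟩ <;> rw [h']
    exacts [hv 0, hv 1]
  have hmax : vmax v ∈ I := by
    rw [vmax_two]; rcases max_cases (v 0) (v 1) with ⟨h',_⟩|⟨h',_⟩ <;> rw [h']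
    exacts [hv 0, hv 1]
  exact hI.out hmin hmax ⟨h.1, h.2⟩

lemma d_M_le (hMT : MeanType I 2 M) {v : Fin 2 → ℝ} (hv : v ∈ box I 2) :
    vmax (M v) - vmin (M v) ≤ vmax v - vmin v := by
  have h0 := hMT v hv 0
  have h1 := hMT v hv 1
  rw [vmax_two (M v), vmin_two (M v)]
  have : max (M v 0) (M v 1) ≤ vmax v := max_le h0.2 h1.2
  have : vmin v ≤ min (M v 0) (M v 1) := le_min h0.1 h1.1
  linarith [max_le h0.2 h1.2]

lemma box_iter (hI : I.OrdConnected) (hMT : MeanType I 2 M) {v : Fin 2 → ℝ}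
    (hv : v ∈ box I 2) : ∀ n, M^[n] v ∈ box I 2 := by
  intro n
  induction n with
  | zero => exact hv
  | succ n ih => rw [Function.iterate_succ_apply']; exact box_M hI hMT ih

lemma d_iter_le (hI : I.OrdConnected) (hMT : MeanType I 2 M) {v : Fin 2 → ℝ}
    (hv : v ∈ box I 2) (n : ℕ) : ∀ k, vmax (M^[n+k] v) - vmin (M^[n+k] v) ≤
      vmax (M^[n] v) - vmin (M^[n] v) := by
  intro k
  induction k with
  | zero => exact le_refl _
  | succ k ih =>
      rw [← Nat.add_assoc, Function.iterate_succ_apply']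
      exact le_trans (d_M_le hMT (box_iter hI hMT hv _)) ih

lemma keyL (hMT : MeanType I 2 M) {w : Fin 2 → ℝ} (hw : w ∈ box I 2)
    (hd : vmax (M w) - vmin (M w) = vmax w - vmin w) :
    (M w 0 = w 0 ∧ M w 1 = w 1) ∨ (M w 0 = w 1 ∧ M w 1 = w 0) := by
  have h0 := hMT w hw 0
  have h1 := hMT w hw 1
  rw [vmax_two w, vmin_two w] at h0 h1 hd
  rw [vmax_two (M w), vmin_two (M w)] at hd
  rcases le_total (w 0) (w 1) with h | h <;>
    rcases le_total (M w 0) (M w 1) with h' | h'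
  · rw [max_eq_right h', min_eq_left h'] at hd
    rw [max_eq_right h, min_eq_left h] at hd h0 h1
    exact Or.inl ⟨by linarith, by linarith⟩
  · rw [max_eq_left h', min_eq_right h'] at hd
    rw [max_eq_right h, min_eq_left h] at hd h0 h1
    exact Or.inr ⟨by linarith, by linarith⟩
  · rw [max_eq_right h', min_eq_left h'] at hd
    rw [max_eq_left h, min_eq_right h] at hd h0 h1
    exact Or.inr ⟨by linarith, by linarith⟩
  · rw [max_eq_left h', min_eq_right h'] at hd
    rw [max_eq_left h, min_eq_right h] at hd h0 h1
    exact Or.inl ⟨by linarith, by linarith⟩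
end

lemma ext2 (w u : Fin 2 → ℝ) (h0 : w 0 = u 0) (h1 : w 1 = u 1) : w = u := by
  funext i; fin_cases i <;> assumption

theorem stmt12 (I : Set ℝ) (hI : I.OrdConnected)
    (M : (Fin 2 → ℝ) → (Fin 2 → ℝ)) (hMT : MeanType I 2 M) :
    WeaklyContractive I 2 M ↔ Contractive I 2 (M ∘ M) := by
  constructor
  · intro hW v hv hnc
    by_contra hlt
    push_neg at hlt
    have hMv : M v ∈ box I 2 := box_M hI hMT hv
    have h1 : vmax (M v) - vmin (M v) ≤ vmax v - vmin v := d_M_le hMT hv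
    have h2 : vmax (M (M v)) - vmin (M (M v)) ≤ vmax (M v) - vmin (M v) := d_M_le hMT hMv
    have hlt' : vmax v - vmin v ≤ vmax (M (M v)) - vmin (M (M v)) := by
      simpa [Function.comp] using hlt
    have hd2 : vmax (M (M v)) - vmin (M (M v)) = vmax v - vmin v :=
      le_antisymm (h2.trans h1) hlt'
    have hd1 : vmax (M v) - vmin (M v) = vmax v - vmin v := le_antisymm h1 (by linarith)
    obtain ⟨n₀, hn⟩ := hW v hv hnc
    have hfin := hn n₀ le_rfl
    obtain hA | hB := keyL hMT hv hd1
    · -- M v = v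
      have hMveq : M v = v := ext2 _ _ hA.1 hA.2
      have hall : ∀ n, M^[n] v = v := by
        intro n
        induction n with
        | zero => rfl
        | succ n ih => rw [Function.iterate_succ_apply', ih, hMveq]
      rw [hall n₀] at hfin; linarith
    · -- M v = swap v
      set s : Fin 2 → ℝ := ![v 1, v 0] with hs
      have hs0 : s 0 = v 1 := rfl
      have hs1 : s 1 = v 0 := rfl
      have hMvs : M v = s := ext2 _ _ (by rw [hB.1, hs0]) (by rw [hB.2, hs1])
      have hdMv : vmax (M (M v)) - vmin (M (M v)) = vmax (M v) - vmin (M v) := by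
        rw [hd2, hd1]
      have hMs : M s = v ∨ M s = s := by
        obtain h | h := keyL hMT hMv hdMv
        · exact Or.inr (by rw [← hMvs]; exact ext2 _ _ (by rw [h.1, hMvs]) (by rw [h.2, hMvs]))
        · refine Or.inl ?_
          rw [← hMvs]
          exact ext2 _ _ (by rw [h.1, hMvs, hs1]) (by rw [h.2, hMvs, hs0])
      have ds : vmax s - vmin s = vmax v - vmin v := by
        rw [vmax_two, vmin_two, vmax_two v, vmin_two v, hs0, hs1, max_comm, min_comm]
      have hall : ∀ n, M^[n] v = v ∨ M^[n] v = s := by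
        intro n
        induction n with
        | zero => exact Or.inl rfl
        | succ n ih =>
            rw [Function.iterate_succ_apply']
            obtain e | e := ih
            · rw [e, hMvs]; exact Or.inr rfl
            · rw [e]; exact hMs
      obtain e | e := hall n₀ <;> rw [e] at hfin
      · linarith
      · rw [ds] at hfin; linarith
  · intro hC v hv hnc
    refine ⟨2, fun n hn => ?_⟩
    obtain ⟨k, rfl⟩ := Nat.exists_eq_add_of_le hn
    have h2 : vmax (M^[2] v) - vmin (M^[2] v) < vmax v - vmin v := by
      have := hC v hv hnc
      simpa [Function.comp, Function.iterate_succ_apply'] using this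
    exact (d_iter_le hI hMT hv 2 k).trans_lt h2
end

section
/- Let I ⊆ ℝ be an interval, p ≥ 2, M : I^p → I^p a weakly contractive mean-type mapping, and E ⊆ I^p a nonempty closed subset of a compact set contained in I^p containing no constant vectors, such that M^n(E) ⊆ E for all n ∈ ℕ. Then the infimum d := inf_{v ∈ E} (max(v) − min(v)) is not attained; in particular if E is compact this yields a contradiction, so no such compact E exists. -/
open Set Filter Topology

lemma vmax_cont {p : ℕ} (hp : 0 < p) : Continuous (fun v : Fin p → ℝ => vmax v) := by
  have : Nonempty (Fin p) := ⟨⟨0, hp⟩⟩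
  have hne : (Finset.univ : Finset (Fin p)).Nonempty := Finset.univ_nonempty
  have : (fun v : Fin p → ℝ => vmax v)
      = fun v => Finset.univ.sup' hne (fun i => v i) := by
    funext v
    rw [vmax, ← Finset.sup'_univ_eq_ciSup]
  rw [this]
  exact Continuous.finset_sup'_apply hne fun i _ => continuous_apply i

lemma vmin_cont {p : ℕ} (hp : 0 < p) : Continuous (fun v : Fin p → ℝ => vmin v) := by
  have : Nonempty (Fin p) := ⟨⟨0, hp⟩⟩
  have hne : (Finset.univ : Finset (Fin p)).Nonempty := Finset.univ_nonempty
  have : (fun v : Fin p → ℝ => vmin v)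
      = fun v => Finset.univ.inf' hne (fun i => v i) := by
    funext v
    rw [vmin, ← Finset.inf'_univ_eq_ciInf]
  rw [this]
  exact Continuous.finset_inf'_apply hne fun i _ => continuous_apply i

theorem stmt15 (I : Set ℝ) (hI : I.OrdConnected) (p : ℕ) (hp : 2 ≤ p)
    (M : (Fin p → ℝ) → (Fin p → ℝ)) (hMT : MeanType I p M)
    (hW : WeaklyContractive I p M)
    (E C : Set (Fin p → ℝ)) (hEne : E.Nonempty) (hEC : E ⊆ C)
    (hCcomp : IsCompact C) (hCbox : C ⊆ box I p)
    (hEclosed : IsClosed (Subtype.val ⁻¹' E : Set ↥(box I p)))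
    (hEnc : ∀ v ∈ E, Nonconstant v)
    (hinv : ∀ n : ℕ, ∀ v ∈ E, M^[n] v ∈ E) :
    (∀ v₀ ∈ E, ∃ v₁ ∈ E, vmax v₁ - vmin v₁ < vmax v₀ - vmin v₀) ∧
    ¬ IsCompact E := by
  have hp0 : 0 < p := by omega
  have key : ∀ v₀ ∈ E, ∃ v₁ ∈ E, vmax v₁ - vmin v₁ < vmax v₀ - vmin v₀ := by
    intro v₀ hv₀
    obtain ⟨n₀, hn₀⟩ := hW v₀ (hCbox (hEC hv₀)) (hEnc v₀ hv₀)
    exact ⟨M^[n₀] v₀, hinv n₀ v₀ hv₀, hn₀ n₀ le_rfl⟩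
  refine ⟨key, fun hEcomp => ?_⟩
  have hcont : Continuous (fun v : Fin p → ℝ => vmax v - vmin v) :=
    (vmax_cont hp0).sub (vmin_cont hp0)
  obtain ⟨v₀, hv₀E, hmin⟩ := hEcomp.exists_isMinOn hEne hcont.continuousOn
  obtain ⟨v₁, hv₁E, hlt⟩ := key v₀ hv₀E
  exact absurd (hmin hv₁E) (not_le.mpr hlt)
end
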